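/- Let p be a prime and let f(X) ∈ Z_p[[X]] be nonzero with μ-invariant μ and λ-invariant λ (via Weierstrass preparation f = p^μ P u). Then for all sufficiently large n, the p-adic valuation of the product Π_{ζ^{p^n}=1, ζ≠1} f(ζ − 1) (taken over nontrivial p^n-th roots of unity ζ in an algebraic closure of Q_p, assuming f(ζ−1) ≠ 0 for all such ζ) equals p^n μ + n λ + ν for some constant integer ν independent of n. -/

import Mathlib

set_option linter.unusedSectionVars false
set_option linter.unusedVariables false
open Polynomial in
private lemma stmt19_key {K k M : Type*} [Field K] [Field k] [Field M]
    [Algebra K k] [Algebra K M] (W : K[X]) (φ : k →ₐ[K] M) (a : k) :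
    φ ((W.map (algebraMap K k)).eval a) = (W.map (algebraMap K M)).eval (φ a) := by
  rw [Polynomial.eval_map, ← Polynomial.aeval_def, Polynomial.eval_map,
    ← Polynomial.aeval_def, Polynomial.aeval_algHom_apply]

open Polynomial in
lemma stmt19_galois_descent {K : Type*} [Field K] [CharZero K]
    (L : Type*) [Field L] [Algebra K L] [IsAlgClosed L] (P W : K[X]) :
    (((P.map (algebraMap K L)).roots).map
      (fun a => (W.map (algebraMap K L)).eval a)).prod ∈ Set.range (algebraMap K L) := by
  classical
  set k := P.SplittingField
  have hgal : IsGalois K k := ⟨⟩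
  have hsplits : (P.map (algebraMap K k)).Splits :=
    IsSplittingField.splits k P
  letI ψ : k →ₐ[K] L := IsAlgClosed.lift
  have hcomp : (ψ : k →+* L).comp (algebraMap K k) = algebraMap K L := ψ.comp_algebraMap
  set R : Multiset k := (P.map (algebraMap K k)).roots with hR
  set b : k := (R.map (fun a => (W.map (algebraMap K k)).eval a)).prod with hb
  have hfix : ∀ σ : k ≃ₐ[K] k, σ b = b := by
    intro σ
    have hmapσ : (P.map (algebraMap K k)).map (σ : k →+* k) = P.map (algebraMap K k) := by
      rw [Polynomial.map_map]
      congr 1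
      ext x
      simp
    have hroots : R.map (σ : k → k) = R := by
      have h2 := hsplits.roots_map (σ : k →+* k)
      rw [hmapσ] at h2
      rw [hR]
      exact h2.symm
    calc σ b = ((R.map (fun a => (W.map (algebraMap K k)).eval a)).map (σ : k → k)).prod := by
            rw [hb, ← map_multiset_prod σ]
      _ = ((R.map (σ : k → k)).map (fun a => (W.map (algebraMap K k)).eval a)).prod := by
            rw [Multiset.map_map, Multiset.map_map]
            congr 1
            apply Multiset.map_congr rfl
            intro a _
            exact stmt19_key W (σ : k →ₐ[K] k) a
      _ = b := by rw [hroots]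
  have hbot : b ∈ (⊥ : IntermediateField K k) := by
    have htop : IntermediateField.fixedField (⊤ : Subgroup (k ≃ₐ[K] k)) = ⊥ :=
      ((IsGalois.tfae (F := K) (E := k)).out 0 1).mp hgal
    rw [← htop]
    intro σ
    exact hfix σ.1
  obtain ⟨c, hc⟩ := IntermediateField.mem_bot.mp hbot
  refine ⟨c, ?_⟩
  have hrootsL : (P.map (algebraMap K L)).roots = R.map (ψ : k → L) := by
    rw [← hcomp, ← Polynomial.map_map, hsplits.roots_map (ψ : k →+* L), hR]
    rfl
  rw [hrootsL, Multiset.map_map]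
  have hcong : ∀ a ∈ R, ((fun a => (W.map (algebraMap K L)).eval a) ∘ (ψ : k → L)) a
      = ψ ((W.map (algebraMap K k)).eval a) := fun a _ => (stmt19_key W ψ a).symm
  rw [Multiset.map_congr rfl hcong]
  have : (R.map fun a => ψ ((W.map (algebraMap K k)).eval a)).prod
      = ψ ((R.map fun a => ((W.map (algebraMap K k)).eval a)).prod) := by
    rw [map_multiset_prod ψ, Multiset.map_map]; rfl
  rw [this, ← hb, ← hc]
  exact (ψ.commutes c).symm


section Stmt19Analysis

variable {L : Type} [NormedField L] [IsUltrametricDist L] {p : ℕ}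

private lemma stmt19_dom {a b : L} (h : ‖b‖ < ‖a‖) : ‖a + b‖ = ‖a‖ := by
  rw [IsUltrametricDist.norm_add_eq_max_of_norm_ne_norm
    (x := a) (y := b) (by intro hh; rw [hh] at h; exact lt_irrefl _ h), max_eq_left h.le]

private lemma stmt19_binom (hp : 0 < p) (β : L) :
    (1 + β) ^ p - 1 = ∑ k ∈ Finset.Icc 1 p, (p.choose k : L) * β ^ k := by
  have h := add_pow β 1 p
  simp only [one_pow, mul_one] at h
  have hrange : Finset.range (p + 1) = insert 0 (Finset.Icc 1 p) := by
    ext x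
    simp [Finset.mem_range, Finset.mem_Icc, Nat.lt_succ_iff]
    omega
  rw [add_comm β 1] at h
  rw [h, hrange, Finset.sum_insert (by simp)]
  simp only [pow_zero, Nat.choose_zero_right, Nat.cast_one, one_mul]
  rw [add_comm (1 : L), add_sub_cancel_right]
  apply Finset.sum_congr rfl
  intro k hk
  ring

variable (hp1 : 1 < p) (hpn : ‖(p : L)‖ = (p : ℝ)⁻¹)
  (hch : ∀ k : ℕ, 0 < k → k < p → ‖(p.choose k : L)‖ ≤ (p : ℝ)⁻¹)

include hp1 hpn hch in
private lemma stmt19_step_up {β : L} (hβ0 : β ≠ 0) (hβ : ‖β‖ ^ (p - 1) < (p : ℝ)⁻¹) :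
    ‖(1 + β) ^ p - 1‖ = ‖β‖ * (p : ℝ)⁻¹ := by
  have hppos : (0 : ℝ) < p := by positivity
  have hpinv1 : (p : ℝ)⁻¹ < 1 := by
    rw [inv_lt_one_iff₀]; right; exact_mod_cast hp1
  have hpinv0 : (0:ℝ) < (p:ℝ)⁻¹ := by positivity
  have hβpos : 0 < ‖β‖ := norm_pos_iff.mpr hβ0
  have hβ1 : ‖β‖ < 1 := by
    by_contra hc
    push_neg at hc
    have : (1 : ℝ) ≤ ‖β‖ ^ (p - 1) := one_le_pow₀ hc
    linarith
  have hbin := stmt19_binom (p := p) (by omega) β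
  have hsplit : Finset.Icc 1 p = insert 1 (Finset.Icc 2 p) := by
    ext x; simp only [Finset.mem_Icc, Finset.mem_insert]; omega
  rw [hsplit, Finset.sum_insert (by simp)] at hbin
  simp only [Nat.choose_one_right, pow_one] at hbin
  set S : L := ∑ k ∈ Finset.Icc 2 p, (p.choose k : L) * β ^ k with hS
  set C₀ : ℝ := max ((p:ℝ)⁻¹ * ‖β‖ ^ 2) (‖β‖ ^ (p - 1) * ‖β‖) with hC₀
  have hterm : ∀ k ∈ Finset.Icc 2 p, ‖(p.choose k : L) * β ^ k‖ ≤ C₀ := by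
    intro k hk
    obtain ⟨hk2, hkp⟩ := Finset.mem_Icc.mp hk
    rw [norm_mul, norm_pow]
    rcases eq_or_lt_of_le hkp with hke | hklt
    · rw [hke, Nat.choose_self]
      simp only [Nat.cast_one, norm_one, one_mul]
      refine le_trans (le_of_eq ?_) (le_max_right _ _)
      rw [← pow_succ]
      congr 1
      omega
    · refine le_trans ?_ (le_max_left _ _)
      exact mul_le_mul (hch k (by omega) hklt)
        (pow_le_pow_of_le_one hβpos.le hβ1.le hk2) (by positivity) hpinv0.le
  have hSnorm : ‖S‖ ≤ C₀ := by
    apply IsUltrametricDist.norm_sum_le_of_forall_le_of_nonneg ?_ hterm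
    positivity
  have hC₀lt : C₀ < (p:ℝ)⁻¹ * ‖β‖ := by
    apply max_lt
    · have : ‖β‖ ^ 2 < ‖β‖ := by nlinarith
      nlinarith
    · calc ‖β‖ ^ (p-1) * ‖β‖ < (p:ℝ)⁻¹ * ‖β‖ := by nlinarith
        _ = _ := rfl
  have hpβ : ‖(p : L) * β‖ = (p:ℝ)⁻¹ * ‖β‖ := by rw [norm_mul, hpn]
  rw [hbin, stmt19_dom (a := (p:L) * β) (b := S) (by rw [hpβ]; exact lt_of_le_of_lt hSnorm hC₀lt),
    hpβ, mul_comm]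

include hp1 hpn hch in
private lemma stmt19_contract {β : L} (hβ1 : ‖β‖ < 1) :
    ‖(1 + β) ^ p - 1‖ ≤ ‖β‖ * max (p : ℝ)⁻¹ (‖β‖ ^ (p - 1)) := by
  have hβ0 : 0 ≤ ‖β‖ := norm_nonneg β
  have hpinv0 : (0:ℝ) < (p:ℝ)⁻¹ := by positivity
  rw [stmt19_binom (p := p) (by omega) β]
  apply IsUltrametricDist.norm_sum_le_of_forall_le_of_nonneg (by positivity)
  intro k hk
  obtain ⟨hk1, hkp⟩ := Finset.mem_Icc.mp hk
  rw [norm_mul, norm_pow]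
  rcases eq_or_lt_of_le hkp with hke | hklt
  · rw [hke, Nat.choose_self]
    simp only [Nat.cast_one, norm_one, one_mul]
    calc ‖β‖ ^ p = ‖β‖ * ‖β‖ ^ (p - 1) := by rw [← pow_succ']; congr 1; omega
      _ ≤ ‖β‖ * max (p : ℝ)⁻¹ (‖β‖ ^ (p - 1)) := by
          apply mul_le_mul_of_nonneg_left (le_max_right _ _) hβ0
  · calc ‖(p.choose k : L)‖ * ‖β‖ ^ k ≤ (p:ℝ)⁻¹ * ‖β‖ := by
          apply mul_le_mul (hch k (by omega) hklt)
            (pow_le_of_le_one hβ0 hβ1.le (by omega)) (by positivity) hpinv0.le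
      _ = ‖β‖ * (p:ℝ)⁻¹ := mul_comm _ _
      _ ≤ ‖β‖ * max (p : ℝ)⁻¹ (‖β‖ ^ (p - 1)) := by
          apply mul_le_mul_of_nonneg_left (le_max_left _ _) hβ0

include hp1 hpn hch in
private lemma stmt19_root_lt {ζ : L} {n : ℕ} (hζ : ζ ^ (p ^ n) = 1) (hζ1 : ζ ≠ 1) :
    ‖ζ - 1‖ < 1 := by
  by_contra hc
  push_neg at hc
  have key : ∀ k : ℕ, 1 ≤ ‖ζ ^ (p ^ k) - 1‖ := by
    intro k
    induction k with
    | zero => simpa using hc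
    | succ k ih =>
      set t : L := ζ ^ (p ^ k) - 1 with ht
      have h1t : (1 : ℝ) ≤ ‖t‖ := ih
      have hid : ζ ^ (p ^ (k+1)) - 1 = (1 + t) ^ p - 1 := by
        rw [ht]
        ring_nf
      rw [hid, stmt19_binom (p := p) (by omega) t]
      have hsplit : Finset.Icc 1 p = insert p (Finset.Icc 1 (p-1)) := by
        ext x; simp only [Finset.mem_Icc, Finset.mem_insert]; omega
      rw [hsplit, Finset.sum_insert (by simp; omega), Nat.choose_self]
      simp only [Nat.cast_one, one_mul]
      set T : L := ∑ k ∈ Finset.Icc 1 (p-1), (p.choose k : L) * t ^ k with hT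
      have hpinv1 : (p : ℝ)⁻¹ < 1 := by
        rw [inv_lt_one_iff₀]; right; exact_mod_cast hp1
      have htp : (0:ℝ) < ‖t‖ ^ p := by positivity
      have hTnorm : ‖T‖ ≤ (p:ℝ)⁻¹ * ‖t‖ ^ p := by
        apply IsUltrametricDist.norm_sum_le_of_forall_le_of_nonneg (by positivity)
        intro k hk
        obtain ⟨hk1, hkp⟩ := Finset.mem_Icc.mp hk
        rw [norm_mul, norm_pow]
        exact mul_le_mul (hch k (by omega) (by omega))
          (pow_le_pow_right₀ h1t (by omega)) (by positivity) (by positivity)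
      rw [stmt19_dom (a := t ^ p) (b := T) (by
        rw [norm_pow]
        exact lt_of_le_of_lt hTnorm (by nlinarith))]
      rw [norm_pow]
      exact one_le_pow₀ h1t
  have := key n
  rw [hζ, sub_self, norm_zero] at this
  linarith

include hp1 hpn hch in
private lemma stmt19_eventual {α : L} (hα0 : α ≠ 0) (hα1 : ‖α‖ < 1)
    (hnr : ∀ k : ℕ, (1 + α) ^ (p ^ k) ≠ 1) :
    ∃ c : ℝ, 0 < c ∧ ∃ k₀ : ℕ, ∀ n, k₀ ≤ n →
      ‖(1 + α) ^ (p ^ n) - 1‖ = c * (p : ℝ) ^ (-(n:ℤ)) := by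
  have hppos : (0 : ℝ) < p := by positivity
  have hpinv0 : (0:ℝ) < (p:ℝ)⁻¹ := by positivity
  have hpinv1 : (p : ℝ)⁻¹ < 1 := by
    rw [inv_lt_one_iff₀]; right; exact_mod_cast hp1
  have hαpos : 0 < ‖α‖ := norm_pos_iff.mpr hα0
  set β : ℕ → L := fun n => (1 + α) ^ (p ^ n) - 1 with hβ
  have hrec : ∀ n, β (n+1) = (1 + β n) ^ p - 1 := by
    intro n
    simp only [hβ]
    ring_nf
  have hβ0 : ∀ n, β n ≠ 0 := fun n => sub_ne_zero.mpr (hnr n)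
  set q : ℝ := max (p:ℝ)⁻¹ (‖α‖ ^ (p - 1)) with hq
  have hq0 : 0 < q := lt_of_lt_of_le hpinv0 (le_max_left _ _)
  have hq1 : q < 1 := by
    apply max_lt hpinv1
    exact pow_lt_one₀ hαpos.le hα1 (by omega)
  have hbound : ∀ n, ‖β n‖ ≤ ‖α‖ * q ^ n := by
    intro n
    induction n with
    | zero => simp [hβ, pow_zero, pow_one]
    | succ n ih =>
      have hβn1 : ‖β n‖ < 1 := by
        apply lt_of_le_of_lt ih
        calc ‖α‖ * q ^ n ≤ ‖α‖ * 1 := by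
              apply mul_le_mul_of_nonneg_left (pow_le_one₀ hq0.le hq1.le) hαpos.le
          _ < 1 := by rwa [mul_one]
      have hstep := stmt19_contract hp1 hpn hch hβn1
      rw [hrec n] at *
      apply le_trans hstep
      have hmaxle : max (p:ℝ)⁻¹ (‖β n‖ ^ (p - 1)) ≤ q := by
        apply max_le (le_max_left _ _)
        refine le_trans ?_ (le_max_right (p:ℝ)⁻¹ _)
        apply pow_le_pow_left₀ (norm_nonneg _)
        calc ‖β n‖ ≤ ‖α‖ * q ^ n := ih
          _ ≤ ‖α‖ * 1 := mul_le_mul_of_nonneg_left (pow_le_one₀ hq0.le hq1.le) hαpos.le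
          _ = ‖α‖ := mul_one _
      calc ‖β n‖ * max (p:ℝ)⁻¹ (‖β n‖ ^ (p - 1)) ≤ (‖α‖ * q ^ n) * q := by
            apply mul_le_mul ih hmaxle ?_ (by positivity)
            positivity
        _ = ‖α‖ * q ^ (n+1) := by ring
  -- find k₀ with smallness
  have htend : Filter.Tendsto (fun n : ℕ => (‖α‖ * q ^ n) ^ (p - 1)) Filter.atTop (nhds 0) := by
    have h1 : Filter.Tendsto (fun n : ℕ => ‖α‖ * q ^ n) Filter.atTop (nhds 0) := by
      have := tendsto_pow_atTop_nhds_zero_of_lt_one hq0.le hq1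
      simpa using this.const_mul ‖α‖
    have h2 := h1.pow (p - 1)
    rwa [zero_pow (by omega : p - 1 ≠ 0)] at h2
  have hev : ∀ᶠ n in Filter.atTop, (‖α‖ * q ^ n) ^ (p - 1) < (p:ℝ)⁻¹ :=
    htend.eventually_lt_const hpinv0
  obtain ⟨k₀, hk₀⟩ := hev.exists_forall_of_atTop
  have hβk₀pos : 0 < ‖β k₀‖ := norm_pos_iff.mpr (hβ0 k₀)
  refine ⟨‖β k₀‖ * (p:ℝ) ^ (k₀ : ℤ), mul_pos hβk₀pos (zpow_pos hppos _), k₀, ?_⟩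
  -- by induction from k₀, with invariant
  have main : ∀ m : ℕ, ‖β (k₀ + m)‖ = ‖β k₀‖ * (p:ℝ)⁻¹ ^ m ∧ ‖β (k₀ + m)‖ ^ (p-1) < (p:ℝ)⁻¹ := by
    intro m
    induction m with
    | zero =>
      refine ⟨by simp, ?_⟩
      calc ‖β k₀‖ ^ (p-1) ≤ (‖α‖ * q ^ k₀) ^ (p-1) :=
            pow_le_pow_left₀ (norm_nonneg _) (hbound k₀) _
        _ < (p:ℝ)⁻¹ := hk₀ k₀ le_rfl
    | succ m ih =>
      obtain ⟨ih1, ih2⟩ := ih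
      have hstep := stmt19_step_up hp1 hpn hch (hβ0 (k₀ + m)) ih2
      rw [← hrec (k₀ + m)] at hstep
      have heq : k₀ + (m + 1) = (k₀ + m) + 1 := by omega
      constructor
      · rw [heq, hstep, ih1]; ring
      · rw [heq, hstep]
        have hle : ‖β (k₀+m)‖ * (p:ℝ)⁻¹ ≤ ‖β (k₀+m)‖ := by
          nlinarith [norm_nonneg (β (k₀+m)), hpinv1, hpinv0]
        calc (‖β (k₀+m)‖ * (p:ℝ)⁻¹) ^ (p-1) ≤ ‖β (k₀+m)‖ ^ (p-1) :=
              pow_le_pow_left₀ (by positivity) hle _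
          _ < (p:ℝ)⁻¹ := ih2
      
  intro n hn
  obtain ⟨m, rfl⟩ := Nat.exists_eq_add_of_le hn
  rw [(main m).1]
  have hz : (p:ℝ) ^ ((k₀:ℤ)) * (p:ℝ) ^ (-((k₀ + m : ℕ) : ℤ)) = (p:ℝ)⁻¹ ^ m := by
    rw [← zpow_add₀ hppos.ne']
    have he : (k₀:ℤ) + -((k₀ + m : ℕ):ℤ) = -(m:ℤ) := by push_cast; ring
    rw [he, zpow_neg, ← inv_zpow, zpow_natCast]
  rw [mul_assoc, hz]

end Stmt19Analysis


private lemma stmt19_dom' {L : Type} [NormedField L] [IsUltrametricDist L] {a b : L}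
    (h : ‖b‖ < ‖a‖) : ‖a + b‖ = ‖a‖ := by
  rw [IsUltrametricDist.norm_add_eq_max_of_norm_ne_norm
    (x := a) (y := b) (by intro hh; rw [hh] at h; exact lt_irrefl _ h), max_eq_left h.le]

private lemma stmt19_Proot_lt {p : ℕ} [Fact p.Prime] {L : Type} [NormedField L]
    [IsUltrametricDist L] [Algebra ℤ_[p] L]
    (hnorm : ∀ x : ℤ_[p], ‖algebraMap ℤ_[p] L x‖ = ‖x‖)
    {P : Polynomial ℤ_[p]} (hPmon : P.Monic)
    (hPdist : ∀ i < P.natDegree, (p : ℤ_[p]) ∣ P.coeff i)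
    {α : L} (hroot : (P.map (algebraMap ℤ_[p] L)).eval α = 0) : ‖α‖ < 1 := by
  have hp1 : 1 < p := (Fact.out : p.Prime).one_lt
  have hppos : (0:ℝ) < p := by positivity
  have hpinv1 : (p : ℝ)⁻¹ < 1 := by rw [inv_lt_one_iff₀]; right; exact_mod_cast hp1
  set ι := algebraMap ℤ_[p] L with hι
  set d := P.natDegree with hd
  rcases Nat.eq_zero_or_pos d with hd0 | hdpos
  · exfalso
    have : P = 1 := hPmon.natDegree_eq_zero.mp hd0
    rw [this] at hroot
    simp at hroot
  by_contra hc
  push_neg at hc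
  have hα0 : 0 < ‖α‖ := lt_of_lt_of_le one_pos hc
  have heval : (P.map ι).eval α = ∑ i ∈ Finset.range (d + 1), ι (P.coeff i) * α ^ i := by
    rw [Polynomial.eval_eq_sum_range' (lt_of_le_of_lt (Polynomial.natDegree_map_le)
      (Nat.lt_succ_self d))]
    apply Finset.sum_congr rfl
    intro i _
    rw [Polynomial.coeff_map]
  rw [Finset.sum_range_succ] at heval
  have hlead : P.coeff d = 1 := hPmon
  rw [hlead, map_one, one_mul, add_comm] at heval
  have hS : ‖∑ i ∈ Finset.range d, ι (P.coeff i) * α ^ i‖ ≤ (p:ℝ)⁻¹ * ‖α‖ ^ d := by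
    apply IsUltrametricDist.norm_sum_le_of_forall_le_of_nonneg (by positivity)
    intro i hi
    have hi' : i < d := Finset.mem_range.mp hi
    obtain ⟨c, hcc⟩ := hPdist i hi'
    rw [norm_mul, hnorm, hcc, norm_mul, PadicInt.norm_p, norm_pow]
    calc (p:ℝ)⁻¹ * ‖c‖ * ‖α‖ ^ i ≤ (p:ℝ)⁻¹ * 1 * ‖α‖ ^ d := by
          apply mul_le_mul (by
            apply mul_le_mul_of_nonneg_left (PadicInt.norm_le_one c) (by positivity))
            (pow_le_pow_right₀ hc hi'.le) (by positivity) (by positivity)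
      _ = (p:ℝ)⁻¹ * ‖α‖ ^ d := by ring
  have hαd1 : (1:ℝ) ≤ ‖α‖ ^ d := one_le_pow₀ hc
  have hdom : ‖α ^ d + ∑ i ∈ Finset.range d, ι (P.coeff i) * α ^ i‖ = ‖α ^ d‖ :=
    stmt19_dom' (by
      rw [norm_pow]
      refine lt_of_le_of_lt hS ?_
      nlinarith)
  have h0 : ‖α ^ d + ∑ i ∈ Finset.range d, ι (P.coeff i) * α ^ i‖ = 0 := by
    rw [← heval, hroot, norm_zero]
  rw [hdom, norm_pow] at h0
  linarith

open PowerSeries in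
private lemma stmt19_eval {p : ℕ} [Fact p.Prime] {L : Type} [NormedField L]
    [IsUltrametricDist L] [CompleteSpace L] [Algebra ℤ_[p] L]
    (hnorm : ∀ x : ℤ_[p], ‖algebraMap ℤ_[p] L x‖ = ‖x‖)
    {f : PowerSeries ℤ_[p]} {μ : ℕ} {P : Polynomial ℤ_[p]} {u : PowerSeries ℤ_[p]}
    (hu : IsUnit u)
    (hdec : f = PowerSeries.C ((p : ℤ_[p]) ^ μ) * (P : PowerSeries ℤ_[p]) * u)
    {t : L} (ht : ‖t‖ < 1) :
    ∃ U : L, ‖U‖ = 1 ∧ HasSum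
      (fun i : ℕ => algebraMap ℤ_[p] L (PowerSeries.coeff i f) * t ^ i)
      (algebraMap ℤ_[p] L ((p : ℤ_[p]) ^ μ) * (P.map (algebraMap ℤ_[p] L)).eval t * U) := by
  set ι := algebraMap ℤ_[p] L with hι
  have ht0 : (0:ℝ) ≤ ‖t‖ := norm_nonneg t
  have hgeo : Summable (fun i : ℕ => ‖t‖ ^ i) := summable_geometric_of_lt_one ht0 ht
  set g : PowerSeries ℤ_[p] := PowerSeries.C ((p : ℤ_[p]) ^ μ) * (P : PowerSeries ℤ_[p])
    with hg
  set a : ℕ → L := fun i => ι (PowerSeries.coeff i g) * t ^ i with ha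
  set b : ℕ → L := fun i => ι (PowerSeries.coeff i u) * t ^ i with hb
  have hbound : ∀ (x : ℤ_[p]) (i : ℕ), ‖ι x * t ^ i‖ ≤ ‖t‖ ^ i := by
    intro x i
    rw [norm_mul, hnorm, norm_pow]
    exact mul_le_of_le_one_left (by positivity) (PadicInt.norm_le_one x)
  have hsa : Summable fun i => ‖a i‖ :=
    Summable.of_nonneg_of_le (fun i => norm_nonneg _) (fun i => hbound _ i) hgeo
  have hsb : Summable fun i => ‖b i‖ :=
    Summable.of_nonneg_of_le (fun i => norm_nonneg _) (fun i => hbound _ i) hgeo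
  have hcoeffg : ∀ i, PowerSeries.coeff i g = (p : ℤ_[p]) ^ μ * P.coeff i := by
    intro i
    rw [hg, PowerSeries.coeff_C_mul, Polynomial.coeff_coe]
  -- sum of the polynomial part
  have hasuma : HasSum a (ι ((p : ℤ_[p]) ^ μ) * (P.map ι).eval t) := by
    have hzero : ∀ i ∉ Finset.range (P.natDegree + 1), a i = 0 := by
      intro i hi
      rw [ha]
      simp only [hcoeffg i, Polynomial.coeff_eq_zero_of_natDegree_lt
        (by simpa using Nat.lt_of_succ_le (Nat.not_lt.mp (fun h => hi (Finset.mem_range.mpr h)))),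
        mul_zero, map_zero, zero_mul]
    have hval : ∑ i ∈ Finset.range (P.natDegree + 1), a i
        = ι ((p : ℤ_[p]) ^ μ) * (P.map ι).eval t := by
      rw [Polynomial.eval_eq_sum_range' (lt_of_le_of_lt (Polynomial.natDegree_map_le)
        (Nat.lt_succ_self P.natDegree)), Finset.mul_sum]
      apply Finset.sum_congr rfl
      intro i _
      rw [ha]
      simp only [hcoeffg i, Polynomial.coeff_map, map_mul]
      ring
    rw [← hval]
    exact hasSum_sum_of_ne_finset_zero hzero
  have hsb' : Summable b := hsb.of_norm
  set U : L := ∑' i, b i with hU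
  have hasumb : HasSum b U := hsb'.hasSum
  refine ⟨U, ?_, ?_⟩
  · -- norm of U is 1
    have hc₀ : IsUnit (PowerSeries.constantCoeff u) :=
      PowerSeries.isUnit_iff_constantCoeff.mp hu
    have hc₀n : ‖ι (PowerSeries.constantCoeff u)‖ = 1 := by
      rw [hnorm]; exact PadicInt.isUnit_iff.mp hc₀
    have hb0 : b 0 = ι (PowerSeries.constantCoeff u) := by
      rw [hb]
      simp [PowerSeries.coeff_zero_eq_constantCoeff]
    set v : ℕ → L := fun i => b i - (if i = 0 then b 0 else 0) with hv
    have hasumv : HasSum v (U - b 0) := hasumb.sub (hasSum_ite_eq 0 (b 0))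
    have hvb : ∀ i, ‖v i‖ ≤ ‖t‖ := by
      intro i
      rw [hv]
      rcases Nat.eq_zero_or_pos i with rfl | hi
      · simp
      · simp only [if_neg (by omega : ¬ i = 0), sub_zero]
        exact le_trans (hbound _ i) (pow_le_of_le_one ht0 ht.le (by omega))
    have hUsub : ‖U - b 0‖ ≤ ‖t‖ := by
      rw [← hasumv.tsum_eq]
      exact IsUltrametricDist.norm_tsum_le_of_forall_le_of_nonneg ht0 hvb
    have hb0n : ‖b 0‖ = 1 := by rw [hb0]; exact hc₀n
    have hlt : ‖U - b 0‖ < ‖b 0‖ := by rw [hb0n]; exact lt_of_le_of_lt hUsub ht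
    have hsplit : b 0 + (U - b 0) = U := by ring
    calc ‖U‖ = ‖b 0 + (U - b 0)‖ := by rw [hsplit]
      _ = ‖b 0‖ := stmt19_dom' hlt
      _ = 1 := hb0n
  · -- Cauchy product
    have hprod := tsum_mul_tsum_eq_tsum_sum_antidiagonal_of_summable_norm hsa hsb
    have hfterm : ∀ n : ℕ, (∑ kl ∈ Finset.HasAntidiagonal.antidiagonal n, a kl.1 * b kl.2)
        = ι (PowerSeries.coeff n f) * t ^ n := by
      intro n
      rw [hdec, PowerSeries.coeff_mul, map_sum, Finset.sum_mul]
      apply Finset.sum_congr rfl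
      intro kl hkl
      have hkl' : kl.1 + kl.2 = n := Finset.HasAntidiagonal.mem_antidiagonal.mp hkl
      rw [ha, hb]
      simp only [map_mul]
      rw [← hkl', pow_add]
      ring
    have hsum2 : Summable (fun n => ∑ kl ∈ Finset.HasAntidiagonal.antidiagonal n, a kl.1 * b kl.2) :=
      (summable_norm_sum_mul_antidiagonal_of_summable_norm hsa hsb).of_norm
    have h3 : HasSum (fun n => ∑ kl ∈ Finset.HasAntidiagonal.antidiagonal n, a kl.1 * b kl.2)
        ((∑' i, a i) * ∑' i, b i) := by
      rw [hprod]
      exact hsum2.hasSum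
    rw [funext hfterm] at h3
    rw [hasuma.tsum_eq, hasumb.tsum_eq] at h3
    exact h3


open scoped Classical

/-- Let `f ∈ ℤ_p[[X]]` be nonzero with Weierstrass decomposition
`f = p^μ P u` (`P` distinguished of degree `λ`, `u` a unit). Evaluate `f` in a
complete algebraically closed normed field `L` whose norm extends the `p`-adic
norm of `ℤ_p` (so that the series `F ζ = Σ coeff_i(f)·(ζ−1)^i` converges for
`p^n`-th roots of unity `ζ`). If `F ζ ≠ 0` for every nontrivial `p^n`-th root
of unity `ζ`, then for all sufficiently large `n` the total `p`-adic valuation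
of `Π_{ζ^{p^n}=1, ζ≠1} F ζ` equals `p^n μ + n λ + ν` for a constant `ν`
independent of `n`; equivalently the norm of the product is
`p^{−(p^n μ + n λ + ν)}`. -/
theorem stmt19 (p : ℕ) [Fact p.Prime]
    (f : PowerSeries ℤ_[p]) (hf : f ≠ 0)
    (μ lam : ℕ) (P : Polynomial ℤ_[p]) (u : PowerSeries ℤ_[p])
    (hu : IsUnit u) (hPmon : P.Monic)
    (hPdist : ∀ i < P.natDegree, (p : ℤ_[p]) ∣ P.coeff i)
    (hdeg : P.natDegree = lam)
    (hdec : f = PowerSeries.C ((p : ℤ_[p]) ^ μ) * (P : PowerSeries ℤ_[p]) * u)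
    (L : Type) [NormedField L] [CompleteSpace L] [IsAlgClosed L] [Algebra ℤ_[p] L]
    (hnorm : ∀ x : ℤ_[p], ‖algebraMap ℤ_[p] L x‖ = ‖x‖)
    (F : L → L)
    (hF : ∀ ζ : L, HasSum
      (fun i : ℕ => algebraMap ℤ_[p] L (PowerSeries.coeff i f) * (ζ - 1) ^ i) (F ζ))
    (hne : ∀ n : ℕ, ∀ ζ : L, ζ ^ (p ^ n) = 1 → ζ ≠ 1 → F ζ ≠ 0) :
    ∃ ν : ℤ, ∃ N : ℕ, ∀ n ≥ N,
      ‖∏ ζ ∈ (Polynomial.nthRootsFinset (p ^ n) (1 : L)).erase 1, F ζ‖ =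
        (p : ℝ) ^ (-((p ^ n * μ + n * lam : ℕ) + ν)) := by
  classical
  have hp' : p.Prime := Fact.out
  have hp1 : 1 < p := hp'.one_lt
  have hppos : (0:ℝ) < p := by positivity
  have hpR1 : (1:ℝ) < p := by exact_mod_cast hp1
  set ι := algebraMap ℤ_[p] L with hι
  -- basic instances
  haveI hud : IsUltrametricDist L := by
    apply IsUltrametricDist.isUltrametricDist_of_forall_norm_natCast_le_one
    intro n
    rw [← map_natCast ι n, hnorm]
    exact PadicInt.norm_le_one _
  have hinj : Function.Injective ι := by
    intro x y hxy
    have h0 : ‖x - y‖ = 0 := by rw [← hnorm, map_sub, hxy, sub_self, norm_zero]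
    have := norm_eq_zero.mp h0
    exact sub_eq_zero.mp this
  haveI : CharZero L := ⟨fun a b h => Nat.cast_injective (R := ℤ_[p])
    (hinj (by rw [map_natCast, map_natCast, h]))⟩
  -- norm facts
  have hpnL : ‖(p : L)‖ = (p:ℝ)⁻¹ := by
    rw [← map_natCast ι p, hnorm, PadicInt.norm_p]
  have hchL : ∀ k : ℕ, 0 < k → k < p → ‖(p.choose k : L)‖ ≤ (p:ℝ)⁻¹ := by
    intro k hk hkp
    obtain ⟨m, hm⟩ := hp'.dvd_choose_self (by omega) hkp
    rw [← map_natCast ι, hnorm, hm]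
    push_cast
    rw [norm_mul, PadicInt.norm_p]
    exact mul_le_of_le_one_right (by positivity) (PadicInt.norm_le_one _)
  -- ℚ_p algebra on L
  letI : Algebra ℚ_[p] L := (IsFractionRing.lift (A := ℤ_[p]) hinj).toAlgebra
  set ι' := algebraMap ℚ_[p] L with hι'
  have hι'eq : ι' = IsFractionRing.lift (A := ℤ_[p]) hinj := rfl
  have hι'ℤ : ∀ x : ℤ_[p], ι' (x : ℚ_[p]) = ι x := by
    intro x
    rw [hι'eq, ← PadicInt.algebraMap_apply, IsFractionRing.lift_algebraMap]
  have hnormQ : ∀ q : ℚ_[p], ‖ι' q‖ = ‖q‖ := by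
    intro q
    obtain ⟨a, b, hbmem, hab⟩ := IsFractionRing.div_surjective (A := ℤ_[p]) (K := ℚ_[p]) q
    rw [← hab, PadicInt.algebraMap_apply, PadicInt.algebraMap_apply, map_div₀, hι'ℤ, hι'ℤ,
      norm_div, norm_div, hnorm, hnorm, PadicInt.norm_def, PadicInt.norm_def]
  -- roots of P in L
  set Pm : Polynomial L := P.map ι with hPm
  have hPmmonic : Pm.Monic := hPmon.map ι
  set R : Multiset L := Pm.roots with hR
  have hcardR : Multiset.card R = lam := by
    have h1 : Multiset.card Pm.roots = Pm.natDegree :=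
      Polynomial.splits_iff_card_roots.mp (IsAlgClosed.splits Pm)
    rw [hR, h1, hPm, hPmon.natDegree_map, hdeg]
  have hRlt1 : ∀ α ∈ R, ‖α‖ < 1 := by
    intro α hα
    refine stmt19_Proot_lt hnorm hPmon hPdist ?_
    exact (Polynomial.mem_roots'.mp hα).2
  have hRroot : ∀ α ∈ R, Pm.eval α = 0 := fun α hα => (Polynomial.mem_roots'.mp hα).2
  -- factorization of F values near 1
  have hFfact : ∀ ζ : L, ‖ζ - 1‖ < 1 → ∃ U : L, ‖U‖ = 1 ∧
      F ζ = ι ((p : ℤ_[p]) ^ μ) * Pm.eval (ζ - 1) * U := by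
    intro ζ h
    obtain ⟨U, hU1, hUsum⟩ := stmt19_eval hnorm hu hdec h
    exact ⟨U, hU1, (hF ζ).unique hUsum⟩
  have hFnorm : ∀ ζ : L, ‖ζ - 1‖ < 1 →
      ‖F ζ‖ = (p:ℝ) ^ (-(μ:ℤ)) * ‖Pm.eval (ζ - 1)‖ := by
    intro ζ h
    obtain ⟨U, hU1, hfeq⟩ := hFfact ζ h
    rw [hfeq, norm_mul, norm_mul, hU1, mul_one, hnorm, PadicInt.norm_p_pow]
  -- roots of unity are close to 1
  have hζ1 : ∀ (n : ℕ) (ζ : L), ζ ^ (p ^ n) = 1 → ζ ≠ 1 → ‖ζ - 1‖ < 1 :=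
    fun n ζ h h1 => stmt19_root_lt hp1 hpnL hchL h h1
  -- roots of P cannot give roots of unity
  have hnotroot : ∀ α ∈ R, α ≠ 0 → ∀ k : ℕ, (1 + α) ^ (p ^ k) ≠ 1 := by
    intro α hα hα0 k hcon
    have h1 : (1 + α) ≠ 1 := by
      intro hh
      apply hα0
      have := hh
      rwa [add_comm, add_eq_right] at this
    have hlt : ‖(1 + α) - 1‖ < 1 := by
      rw [add_sub_cancel_left]
      exact hRlt1 α hα
    obtain ⟨U, hU1, hfeq⟩ := hFfact (1 + α) hlt
    apply hne k (1 + α) hcon h1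
    rw [hfeq, add_sub_cancel_left, hRroot α hα, mul_zero, zero_mul]
  -- the geometric sums
  set T : ℕ → L → L := fun n c => ∑ i ∈ Finset.range (p ^ n), c ^ i with hT
  have hTval : ∀ (n : ℕ) (α : L), α ≠ 0 → ‖T n (1 + α)‖ = ‖(1 + α) ^ (p ^ n) - 1‖ / ‖α‖ := by
    intro n α hα0
    have hgm := geom_sum_mul (1 + α) (p ^ n)
    rw [add_sub_cancel_left] at hgm
    have : ‖T n (1 + α) * α‖ = ‖(1 + α) ^ (p ^ n) - 1‖ := by rw [hT, hgm]
    rw [norm_mul] at this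
    rw [eq_div_iff (ne_of_gt (norm_pos_iff.mpr hα0))]
    exact this
  have hTone : ∀ n : ℕ, ‖T n 1‖ = (p:ℝ) ^ (-(n:ℤ) * (1:ℤ)) := by
    intro n
    have : T n 1 = ((p ^ n : ℕ) : L) := by
      rw [hT]
      simp
    rw [this, ← map_natCast ι, hnorm]
    push_cast
    rw [PadicInt.norm_p_pow]
    ring_nf
  -- choose per-root constants
  have hex : ∀ α : L, ∃ (d : ℝ) (k : ℕ), 0 < d ∧
      (α ∈ R → ∀ n : ℕ, k ≤ n → ‖T n (1 + α)‖ = d * (p:ℝ) ^ (-(n:ℤ))) := by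
    intro α
    by_cases hα : α ∈ R
    · by_cases hα0 : α = 0
      · refine ⟨1, 0, one_pos, ?_⟩
        intro _ n _
        rw [hα0, add_zero, hTone n, one_mul]
        ring_nf
      · obtain ⟨c, hc0, k₀, hck⟩ := stmt19_eventual hp1 hpnL hchL hα0 (hRlt1 α hα)
          (hnotroot α hα hα0)
        refine ⟨c / ‖α‖, k₀, div_pos hc0 (norm_pos_iff.mpr hα0), ?_⟩
        intro _ n hn
        rw [hTval n α hα0, hck n hn]
        ring
    · exact ⟨1, 0, one_pos, fun h => absurd h hα⟩
  choose D Kf hD hDK using hex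
  set N : ℕ := R.toFinset.sup Kf with hN
  -- swap lemma for multiset double products
  have hswaplem : ∀ (M : Multiset L) (Q : Multiset L) (g : L → L → ℝ),
      (Q.map (fun ζ => (M.map (g ζ)).prod)).prod
        = (M.map (fun α => (Q.map (fun ζ => g ζ α)).prod)).prod := by
    intro M Q g
    induction M using Multiset.induction_on with
    | empty => simp
    | cons a M ih =>
      simp only [Multiset.map_cons, Multiset.prod_cons, ← ih, ← Multiset.prod_map_mul]
  -- main per-level computation
  have key : ∀ n : ℕ,
      (∏ ζ ∈ (Polynomial.nthRootsFinset (p ^ n) (1 : L)).erase 1, Pm.eval (ζ - 1)) ∈ Set.range ι' ∧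
      ‖∏ ζ ∈ (Polynomial.nthRootsFinset (p ^ n) (1 : L)).erase 1, Pm.eval (ζ - 1)‖
        = (R.map (fun α => ‖T n (1 + α)‖)).prod ∧
      ‖∏ ζ ∈ (Polynomial.nthRootsFinset (p ^ n) (1 : L)).erase 1, F ζ‖
        = (p:ℝ) ^ (-(μ:ℤ) * ((p ^ n - 1 : ℕ) : ℤ)) *
          ‖∏ ζ ∈ (Polynomial.nthRootsFinset (p ^ n) (1 : L)).erase 1, Pm.eval (ζ - 1)‖ := by
    intro n
    set m := p ^ n with hm
    have hm0 : 0 < m := pow_pos hp'.pos n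
    have hmLne : ((m : ℕ) : L) ≠ 0 := Nat.cast_ne_zero.mpr (by omega)
    set ΦL : Polynomial L := ∑ i ∈ Finset.range m, Polynomial.X ^ i with hΦ
    have hΦmonic : ΦL.Monic := Polynomial.monic_geom_sum_X (by omega)
    have hmul : (Polynomial.X - Polynomial.C 1) * ΦL = Polynomial.X ^ m - Polynomial.C (1:L) := by
      have h5 := mul_geom_sum (Polynomial.X : Polynomial L) m
      rw [hΦ]
      simpa using h5
    have hsep : (Polynomial.X ^ m - Polynomial.C (1:L)).Separable :=
      Polynomial.separable_X_pow_sub_C 1 (by exact_mod_cast hmLne) one_ne_zero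
    have hnodup := Polynomial.nodup_roots hsep
    have hrootsplit : (Polynomial.X ^ m - Polynomial.C (1:L)).roots = 1 ::ₘ ΦL.roots := by
      rw [← hmul, Polynomial.roots_mul (by
        rw [hmul]; exact Polynomial.X_pow_sub_C_ne_zero hm0 1), Polynomial.roots_X_sub_C,
        Multiset.singleton_add]
    have hnodup2 : ((1:L) ::ₘ ΦL.roots).Nodup := by rwa [hrootsplit] at hnodup
    have h1notin : (1:L) ∉ ΦL.roots := (Multiset.nodup_cons.mp hnodup2).1
    have hnthval : Polynomial.nthRoots m (1:L) = (Polynomial.X ^ m - Polynomial.C (1:L)).roots :=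
      rfl
    have hprodgen : ∀ G : L → L, ∏ ζ ∈ (Polynomial.nthRootsFinset m (1 : L)).erase 1, G ζ
        = (ΦL.roots.map G).prod := by
      intro G
      rw [Finset.prod_eq_multiset_prod]
      congr 1
      have h6 : ((Polynomial.nthRootsFinset m (1 : L)).erase 1).val
          = (Polynomial.nthRoots m (1:L)).erase 1 := by
        rw [Finset.erase_val, Polynomial.nthRootsFinset_def, Multiset.toFinset_val,
          Multiset.dedup_eq_self.mpr (by rw [hnthval]; exact hnodup)]
      rw [h6, hnthval, hrootsplit, Multiset.erase_cons_head]
    have hmemΦ : ∀ ζ ∈ ΦL.roots, ζ ^ m = 1 ∧ ζ ≠ 1 := by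
      intro ζ hζ
      have h7 : ζ ∈ Polynomial.nthRoots m (1:L) := by
        rw [hnthval, hrootsplit]
        exact Multiset.mem_cons_of_mem hζ
      refine ⟨(Polynomial.mem_nthRoots hm0).mp h7, ?_⟩
      intro h8
      exact h1notin (h8 ▸ hζ)
    have hnormprod : ∀ (M : Multiset L), ‖M.prod‖ = (M.map (fun x : L => ‖x‖)).prod := by
      intro M
      exact (Multiset.prod_hom M (normHom.toMonoidHom : L →* ℝ)).symm
    have hcardΦ : Multiset.card ΦL.roots = m - 1 := by
      have h9 : Multiset.card (Polynomial.X ^ m - Polynomial.C (1:L)).roots = m := by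
        rw [Polynomial.splits_iff_card_roots.mp (IsAlgClosed.splits _),
          Polynomial.natDegree_X_pow_sub_C]
      rw [hrootsplit, Multiset.card_cons] at h9
      omega
    have hPmnorm : ∀ ζ : L, ‖Pm.eval (ζ - 1)‖ = (R.map (fun α => ‖ζ - 1 - α‖)).prod := by
      intro ζ
      have hPmfact : Pm = (R.map (fun a => Polynomial.X - Polynomial.C a)).prod :=
        (IsAlgClosed.splits Pm).eq_prod_roots_of_monic hPmmonic
      conv_lhs => rw [hPmfact]
      rw [Polynomial.eval_multiset_prod, Multiset.map_map, hnormprod, Multiset.map_map]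
      apply congrArg
      apply Multiset.map_congr rfl
      intro α _
      simp [sub_sub]
    have hinner : ∀ α : L, (ΦL.roots.map (fun ζ => ‖ζ - 1 - α‖)).prod = ‖T n (1 + α)‖ := by
      intro α
      have hΦfact : ΦL = (ΦL.roots.map (fun a => Polynomial.X - Polynomial.C a)).prod :=
        (IsAlgClosed.splits _).eq_prod_roots_of_monic hΦmonic
      have h10 : T n (1 + α) = ΦL.eval (1 + α) := by
        rw [hT, hΦ]
        simp [Polynomial.eval_finset_sum, hm]
      rw [h10]
      conv_rhs => rw [hΦfact]
      rw [Polynomial.eval_multiset_prod, Multiset.map_map, hnormprod, Multiset.map_map]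
      apply congrArg
      apply Multiset.map_congr rfl
      intro ζ _
      simp only [Function.comp_apply, Polynomial.eval_sub, Polynomial.eval_X, Polynomial.eval_C]
      rw [← norm_sub_rev]
      congr 1
      ring
    refine ⟨?_, ?_, ?_⟩
    · -- membership via Galois descent
      set Φq : Polynomial ℚ_[p] := ∑ i ∈ Finset.range m, Polynomial.X ^ i with hΦq
      set W : Polynomial ℚ_[p] :=
        (P.map (algebraMap ℤ_[p] ℚ_[p])).comp (Polynomial.X - Polynomial.C 1) with hW
      have hcompring : ι'.comp (algebraMap ℤ_[p] ℚ_[p]) = ι := by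
        ext x
        rw [RingHom.comp_apply, PadicInt.algebraMap_apply, hι'ℤ]
      have hΦqmap : Φq.map ι' = ΦL := by
        rw [hΦq, hΦ, Polynomial.map_sum]
        apply Finset.sum_congr rfl
        intro i _
        rw [Polynomial.map_pow, Polynomial.map_X]
      have hWmap : ∀ ζ : L, (W.map ι').eval ζ = Pm.eval (ζ - 1) := by
        intro ζ
        rw [hW, Polynomial.map_comp, Polynomial.eval_comp, Polynomial.map_map, hcompring]
        simp [hPm]
      have hdesc := stmt19_galois_descent L Φq W
      rw [hΦqmap] at hdesc
      have heq2 : (ΦL.roots.map (fun a => (W.map (algebraMap ℚ_[p] L)).eval a)).prod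
          = ∏ ζ ∈ (Polynomial.nthRootsFinset m (1 : L)).erase 1, Pm.eval (ζ - 1) := by
        rw [hprodgen (fun ζ => Pm.eval (ζ - 1))]
        apply congrArg
        apply Multiset.map_congr rfl
        intro ζ _
        exact hWmap ζ
      rw [heq2] at hdesc
      exact hdesc
    · rw [hprodgen (fun ζ => Pm.eval (ζ - 1)), hnormprod, Multiset.map_map]
      have h11 : (ΦL.roots.map (fun ζ => ‖Pm.eval (ζ - 1)‖)).prod
          = (ΦL.roots.map (fun ζ => (R.map (fun α => ‖ζ - 1 - α‖)).prod)).prod :=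
        congrArg _ (Multiset.map_congr rfl (fun ζ _ => hPmnorm ζ))
      rw [show (((fun x : L => ‖x‖) ∘ fun ζ => Pm.eval (ζ - 1)) : L → ℝ)
          = fun ζ => ‖Pm.eval (ζ - 1)‖ from rfl, h11,
        hswaplem R ΦL.roots (fun ζ α => ‖ζ - 1 - α‖)]
      exact congrArg _ (Multiset.map_congr rfl (fun α _ => hinner α))
    · rw [hprodgen F, hprodgen (fun ζ => Pm.eval (ζ - 1)), hnormprod, hnormprod,
        Multiset.map_map, Multiset.map_map]
      have h12 : ∀ ζ ∈ ΦL.roots, ((fun x : L => ‖x‖) ∘ F) ζ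
          = (p:ℝ)^(-(μ:ℤ)) * (((fun x : L => ‖x‖) ∘ fun ζ => Pm.eval (ζ - 1)) ζ) := by
        intro ζ hζ
        obtain ⟨hζm, hζne⟩ := hmemΦ ζ hζ
        exact hFnorm ζ (hζ1 n ζ hζm hζne)
      rw [Multiset.map_congr rfl h12, Multiset.prod_map_mul, Multiset.map_const',
        Multiset.prod_replicate, hcardΦ, ← zpow_natCast ((p:ℝ)^(-(μ:ℤ))) (m-1), ← zpow_mul]
  -- final assembly
  set E : ℝ := (R.map D).prod with hE
  have hEpos : 0 < E := by
    rw [hE]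
    apply Multiset.prod_pos
    intro x hx
    obtain ⟨α, hα, rfl⟩ := Multiset.mem_map.mp hx
    exact hD α
  have hpne : (p:ℝ) ≠ 0 := ne_of_gt hppos
  have hpow : ∀ (a : ℤ) (b : ℕ), ((p:ℝ) ^ a) ^ b = (p:ℝ) ^ (a * b) := by
    intro a b
    rw [← zpow_natCast ((p:ℝ) ^ a) b, ← zpow_mul]
  have hTprod : ∀ n : ℕ, N ≤ n → (R.map (fun α => ‖T n (1 + α)‖)).prod
      = E * (p:ℝ) ^ (-(n:ℤ) * (lam:ℤ)) := by
    intro n hn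
    have hcong : ∀ α ∈ R, ‖T n (1 + α)‖ = D α * (p:ℝ) ^ (-(n:ℤ)) := by
      intro α hα
      exact hDK α hα n (le_trans (Finset.le_sup (Multiset.mem_toFinset.mpr hα)) hn)
    rw [Multiset.map_congr rfl hcong, Multiset.prod_map_mul, Multiset.map_const',
      Multiset.prod_replicate, hcardR, ← hE, hpow]
  obtain ⟨hmemN, hnormN, hFN⟩ := key N
  obtain ⟨c, hc⟩ := hmemN
  have hnormN' : ‖∏ ζ ∈ (Polynomial.nthRootsFinset (p ^ N) (1 : L)).erase 1, Pm.eval (ζ - 1)‖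
      = E * (p:ℝ) ^ (-(N:ℤ) * (lam:ℤ)) := by rw [hnormN, hTprod N le_rfl]
  have hc0 : c ≠ 0 := by
    intro h0
    rw [h0, map_zero] at hc
    rw [← hc, norm_zero] at hnormN'
    have hgt : (0:ℝ) < E * (p:ℝ) ^ (-(N:ℤ) * (lam:ℤ)) := by positivity
    exact (ne_of_gt hgt) hnormN'.symm
  set w : ℤ := c.valuation with hw
  have hcnorm : ‖c‖ = (p:ℝ) ^ (-w) := Padic.norm_eq_zpow_neg_valuation hc0
  have hEval : E * (p:ℝ) ^ (-(N:ℤ) * (lam:ℤ)) = (p:ℝ) ^ (-w) := by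
    rw [← hnormN', ← hc, hnormQ, hcnorm]
  have hEzp : E = (p:ℝ) ^ (-w + (N:ℤ) * (lam:ℤ)) := by
    have h15 : E = (p:ℝ) ^ (-w) / (p:ℝ) ^ (-(N:ℤ) * (lam:ℤ)) :=
      (eq_div_iff (zpow_ne_zero _ hpne)).mpr hEval
    rw [h15, ← zpow_sub₀ hpne]
    congr 1
    ring
  refine ⟨w - N * lam - μ, N, ?_⟩
  intro n hn
  obtain ⟨_, hnormn, hFn⟩ := key n
  rw [hFn, hnormn, hTprod n hn, hEzp, ← zpow_add₀ hpne, ← zpow_add₀ hpne]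
  congr 1
  have h1pn : (1:ℕ) ≤ p ^ n := Nat.one_le_pow _ _ hp'.pos
  push_cast [h1pn]
  ring
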